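/- arXiv:2405.12748 — 3 statements merged into one kernel-verified Lean document; each statement's English description precedes it below -/
import Mathlib

section
/- Let p : 𝕌 → Sym(n,ℝ) be smooth, write p(u) = p̃(u) + P(u)·I with tr(p̃(u)) = 0 and n·P(u) = tr(p(u)), and let G = G_β(p). Then: (i) the dilation field D(u,v,x) = (0, 2v, x) satisfies ℒ_D G = 2·G; (ii) the field H(u,v,x) = (0, 1, 0) satisfies ℒ_H G = 0; (iii) for any smooth q : 𝕌 → ℝⁿ with q''(u) + p(u)q(u) = 0, the field X_q(u,v,x) = (0, xᵀq'(u), q(u)) satisfies ℒ_{X_q} G = 0; (iv) for any smooth w : 𝕌 → ℝ and constant skew-symmetric n×n matrix W satisfying w''' + 4Pw' + 2P'w = 0 and wp̃' + 2w'p̃ + p̃W − Wp̃ = 0 on 𝕌, the field V_{(w,W)}(u,v,x) = ( w(u), ¼ w''(u)·xᵀx, ½ w'(u)x + Wx ) satisfies ℒ_{V_{(w,W)}} G = S·G with S(u,v,x) = w'(u). -/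
open Matrix

attribute [local instance] Matrix.normedAddCommGroup Matrix.normedSpace

noncomputable section

/-- The manifold `ℝ × ℝ × ℝⁿ`, with points `(u, v, x)`. -/
abbrev Mfd (n : ℕ) := ℝ × ℝ × (Fin n → ℝ)

/-- The Brinkmann metric `2 du dv + xᵀ p(u) x du² − dxᵀ dx`, as a field of bilinear forms. -/
def Gb (n : ℕ) (p : ℝ → Matrix (Fin n) (Fin n) ℝ) :
    Mfd n → Mfd n → Mfd n → ℝ := fun m X₁ X₂ =>
  X₁.1 * X₂.2.1 + X₂.1 * X₁.2.1 + (m.2.2 ⬝ᵥ (p m.1 *ᵥ m.2.2)) * X₁.1 * X₂.1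
    - X₁.2.2 ⬝ᵥ X₂.2.2

/-- Lie derivative of a field of bilinear forms along a vector field. -/
def lieD (n : ℕ) (V : Mfd n → Mfd n) (G : Mfd n → Mfd n → Mfd n → ℝ) :
    Mfd n → Mfd n → Mfd n → ℝ := fun m X Y =>
  fderiv ℝ (fun m' => G m' X Y) m (V m)
    + G m (fderiv ℝ V m X) Y + G m X (fderiv ℝ V m Y)

/-- The trace part `P(u) = tr(p(u))/n` of `p`. -/
def trPart (n : ℕ) (p : ℝ → Matrix (Fin n) (Fin n) ℝ) (u : ℝ) : ℝ :=
  (p u).trace / n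

/-- The trace-free part `p̃(u) = p(u) − P(u)·I` of `p`. -/
def tfPart (n : ℕ) (p : ℝ → Matrix (Fin n) (Fin n) ℝ) (u : ℝ) :
    Matrix (Fin n) (Fin n) ℝ :=
  p u - trPart n p u • (1 : Matrix (Fin n) (Fin n) ℝ)

def entryCLM (n : ℕ) (i j : Fin n) : Matrix (Fin n) (Fin n) ℝ →L[ℝ] ℝ :=
  LinearMap.toContinuousLinearMap (Matrix.entryLinearMap ℝ ℝ i j)
@[simp] lemma entryCLM_apply (n : ℕ) (i j : Fin n) (A : Matrix (Fin n) (Fin n) ℝ) :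
    entryCLM n i j A = A i j := rfl
lemma hasDerivAt_entry {n : ℕ} (i j : Fin n) {p : ℝ → Matrix (Fin n) (Fin n) ℝ}
    {p' : Matrix (Fin n) (Fin n) ℝ} {u : ℝ} (hp : HasDerivAt p p' u) :
    HasDerivAt (fun u => p u i j) (p' i j) u :=
  (entryCLM n i j).hasFDerivAt.comp_hasDerivAt u hp
lemma hasDerivAt_proj {n : ℕ} (i : Fin n) {q : ℝ → (Fin n → ℝ)}
    {q' : Fin n → ℝ} {u : ℝ} (hq : HasDerivAt q q' u) :
    HasDerivAt (fun u => q u i) (q' i) u :=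
  (ContinuousLinearMap.proj (R := ℝ) (φ := fun _ : Fin n => ℝ) i).hasFDerivAt.comp_hasDerivAt u hq
def xCLM (n : ℕ) (i : Fin n) : Mfd n →L[ℝ] ℝ :=
  (ContinuousLinearMap.proj i).comp ((ContinuousLinearMap.snd ℝ ℝ (Fin n → ℝ)).comp
        (ContinuousLinearMap.snd ℝ ℝ (ℝ × (Fin n → ℝ))))
@[simp] lemma xCLM_apply (n : ℕ) (i : Fin n) (X : Mfd n) : xCLM n i X = X.2.2 i := rfl
def uCLM (n : ℕ) : Mfd n →L[ℝ] ℝ := ContinuousLinearMap.fst ℝ ℝ (ℝ × (Fin n → ℝ))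
@[simp] lemma uCLM_apply (n : ℕ) (X : Mfd n) : uCLM n X = X.1 := rfl
def vCLM (n : ℕ) : Mfd n →L[ℝ] ℝ :=
  (ContinuousLinearMap.fst ℝ ℝ (Fin n → ℝ)).comp (ContinuousLinearMap.snd ℝ ℝ (ℝ × (Fin n → ℝ)))
@[simp] lemma vCLM_apply (n : ℕ) (X : Mfd n) : vCLM n X = X.2.1 := rfl
def xvecCLM (n : ℕ) : Mfd n →L[ℝ] (Fin n → ℝ) :=
  (ContinuousLinearMap.snd ℝ ℝ (Fin n → ℝ)).comp (ContinuousLinearMap.snd ℝ ℝ (ℝ × (Fin n → ℝ)))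
@[simp] lemma xvecCLM_apply (n : ℕ) (X : Mfd n) : xvecCLM n X = X.2.2 := rfl
lemma hasFDerivAt_uscalar {n : ℕ} {f : ℝ → ℝ} {f' : ℝ} {m : Mfd n} (hf : HasDerivAt f f' m.1) :
    HasFDerivAt (fun m : Mfd n => f m.1) (((1 : ℝ →L[ℝ] ℝ).smulRight f').comp (uCLM n)) m :=
  hf.hasFDerivAt.comp m (hasFDerivAt_fst)
lemma hasFDerivAt_uvec {n : ℕ} {q : ℝ → (Fin n → ℝ)} {q' : Fin n → ℝ} {m : Mfd n}
    (hq : HasDerivAt q q' m.1) :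
    HasFDerivAt (fun m : Mfd n => q m.1) (((1 : ℝ →L[ℝ] ℝ).smulRight q').comp (uCLM n)) m :=
  hq.hasFDerivAt.comp m (hasFDerivAt_fst)

def quadD (n : ℕ) (A A' : Matrix (Fin n) (Fin n) ℝ) (x : Fin n → ℝ) : Mfd n →L[ℝ] ℝ :=
  (x ⬝ᵥ (A' *ᵥ x)) • uCLM n + ∑ i, ((A *ᵥ x) i + (x ᵥ* A) i) • xCLM n i

lemma quadD_apply (n : ℕ) (A A' : Matrix (Fin n) (Fin n) ℝ) (x : Fin n → ℝ) (X : Mfd n) :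
    quadD n A A' x X = (x ⬝ᵥ (A' *ᵥ x)) * X.1 + X.2.2 ⬝ᵥ (A *ᵥ x) + x ⬝ᵥ (A *ᵥ X.2.2) := by
  have h1 : X.2.2 ⬝ᵥ (A *ᵥ x) = ∑ i, (A *ᵥ x) i * X.2.2 i := by
    simp [dotProduct, mul_comm]
  have h2 : x ⬝ᵥ (A *ᵥ X.2.2) = ∑ i, (x ᵥ* A) i * X.2.2 i := by
    rw [Matrix.dotProduct_mulVec]; simp [dotProduct]
  simp [quadD, h1, h2, Finset.sum_add_distrib, add_mul, add_assoc]

lemma hasFDerivAt_quad {n : ℕ} {p : ℝ → Matrix (Fin n) (Fin n) ℝ}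
    {p' : Matrix (Fin n) (Fin n) ℝ} {m : Mfd n} (hp : HasDerivAt p p' m.1) :
    HasFDerivAt (fun m : Mfd n => m.2.2 ⬝ᵥ (p m.1 *ᵥ m.2.2))
      (quadD n (p m.1) p' m.2.2) m := by
  have heq : (fun m : Mfd n => m.2.2 ⬝ᵥ (p m.1 *ᵥ m.2.2))
      = fun m : Mfd n => ∑ i, ∑ j, m.2.2 i * p m.1 i j * m.2.2 j := by
    funext m'; simp [dotProduct, mulVec, Finset.mul_sum, mul_assoc]
  rw [heq]
  have h := HasFDerivAt.fun_sum (u := (Finset.univ : Finset (Fin n)))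
    (fun i _ => HasFDerivAt.fun_sum (u := (Finset.univ : Finset (Fin n)))
      (fun j _ => (((xCLM n i).hasFDerivAt (x := m)).fun_mul
        (hasFDerivAt_uscalar (hasDerivAt_entry i j hp))).fun_mul ((xCLM n j).hasFDerivAt)))
  refine h.congr_fderiv (ContinuousLinearMap.ext fun X => ?_)
  rw [quadD_apply]
  simp only [ContinuousLinearMap.coe_sum', Finset.sum_apply, ContinuousLinearMap.add_apply,
    ContinuousLinearMap.smul_apply, ContinuousLinearMap.coe_comp', Function.comp_apply,
    ContinuousLinearMap.smulRight_apply, ContinuousLinearMap.one_apply, xCLM_apply, uCLM_apply,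
    smul_eq_mul]
  simp only [dotProduct, mulVec, Finset.mul_sum, Finset.sum_mul, Finset.sum_add_distrib, mul_add,
    add_mul]
  rw [← sub_eq_zero]
  simp only [← Finset.sum_sub_distrib, ← Finset.sum_add_distrib]
  exact Finset.sum_eq_zero fun i _ => Finset.sum_eq_zero fun j _ => by ring

/-- derivative of `m' ↦ Gb n p m' X Y`. -/
lemma hasFDerivAt_Gb {n : ℕ} {p : ℝ → Matrix (Fin n) (Fin n) ℝ}
    {p' : Matrix (Fin n) (Fin n) ℝ} {m : Mfd n} (hp : HasDerivAt p p' m.1) (X Y : Mfd n) :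
    HasFDerivAt (fun m' => Gb n p m' X Y)
      (Y.1 • (X.1 • quadD n (p m.1) p' m.2.2)) m := by
  have h := (((hasFDerivAt_quad hp).mul_const X.1).mul_const Y.1)
  exact (h.const_add (X.1 * Y.2.1 + Y.1 * X.2.1)).sub_const (X.2.2 ⬝ᵥ Y.2.2)

lemma fderiv_Gb_apply {n : ℕ} {p : ℝ → Matrix (Fin n) (Fin n) ℝ}
    {p' : Matrix (Fin n) (Fin n) ℝ} {m : Mfd n} (hp : HasDerivAt p p' m.1) (X Y Z : Mfd n) :
    fderiv ℝ (fun m' => Gb n p m' X Y) m Z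
      = Y.1 * (X.1 * ((m.2.2 ⬝ᵥ (p' *ᵥ m.2.2)) * Z.1 + Z.2.2 ⬝ᵥ (p m.1 *ᵥ m.2.2)
          + m.2.2 ⬝ᵥ (p m.1 *ᵥ Z.2.2))) := by
  rw [(hasFDerivAt_Gb hp X Y).fderiv]
  simp [quadD_apply]

lemma hasDerivAt_of_contDiffOn {E : Type*} [NormedAddCommGroup E] [NormedSpace ℝ E]
    {U : Set ℝ} (hU : IsOpen U)
    {f : ℝ → E} (hf : ContDiffOn ℝ (⊤ : ℕ∞) f U) {u : ℝ} (hu : u ∈ U) :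
    HasDerivAt f (deriv f u) u :=
  ((hf.differentiableOn (by simp)).differentiableAt
    (hU.mem_nhds hu)).hasDerivAt

lemma contDiffOn_deriv {E : Type*} [NormedAddCommGroup E] [NormedSpace ℝ E]
    {U : Set ℝ} (hU : IsOpen U)
    {f : ℝ → E} (hf : ContDiffOn ℝ (⊤ : ℕ∞) f U) :
    ContDiffOn ℝ (⊤ : ℕ∞) (deriv f) U :=
  hf.deriv_of_isOpen hU (by exact_mod_cast le_top)

theorem part1 (n : ℕ)
    (U : Set ℝ) (hUopen : IsOpen U)
    (p : ℝ → Matrix (Fin n) (Fin n) ℝ)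
    (hpsmooth : ContDiffOn ℝ (⊤ : ℕ∞) p U) :
    (∀ m ∈ {m : Mfd n | m.1 ∈ U}, ∀ X Y,
      lieD n (fun m : Mfd n => (0, 2 * m.2.1, m.2.2)) (Gb n p) m X Y
        = 2 * Gb n p m X Y) := by
  intro m hu X Y
  have hp := hasDerivAt_of_contDiffOn hUopen hpsmooth hu
  have hV : HasFDerivAt (fun m : Mfd n => ((0 : ℝ), 2 * m.2.1, m.2.2))
      ((0 : Mfd n →L[ℝ] ℝ).prod (((2 : ℝ) • vCLM n).prod (xvecCLM n))) m := by
    exact (hasFDerivAt_const (0:ℝ) m).prodMk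
      ((((vCLM n).hasFDerivAt (x := m)).const_mul 2).prodMk ((xvecCLM n).hasFDerivAt))
  simp only [lieD, hV.fderiv]
  rw [fderiv_Gb_apply hp]
  simp only [ContinuousLinearMap.prod_apply, ContinuousLinearMap.zero_apply,
    ContinuousLinearMap.smul_apply, vCLM_apply, xvecCLM_apply, smul_eq_mul]
  simp only [Gb]
  ring

theorem part2 (n : ℕ)
    (U : Set ℝ) (hUopen : IsOpen U)
    (p : ℝ → Matrix (Fin n) (Fin n) ℝ)
    (hpsmooth : ContDiffOn ℝ (⊤ : ℕ∞) p U) :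
    (∀ m ∈ {m : Mfd n | m.1 ∈ U}, ∀ X Y,
      lieD n (fun _ : Mfd n => ((0 : ℝ), (1 : ℝ), (0 : Fin n → ℝ))) (Gb n p) m X Y
        = 0) := by
  intro m hu X Y
  have hp := hasDerivAt_of_contDiffOn hUopen hpsmooth hu
  have hV : HasFDerivAt (fun _ : Mfd n => ((0 : ℝ), (1 : ℝ), (0 : Fin n → ℝ)))
      (0 : Mfd n →L[ℝ] Mfd n) m := hasFDerivAt_const _ m
  simp only [lieD, hV.fderiv]
  rw [fderiv_Gb_apply hp]
  simp [Gb]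

def dotD (n : ℕ) (a b x : Fin n → ℝ) : Mfd n →L[ℝ] ℝ :=
  (x ⬝ᵥ b) • uCLM n + ∑ i, (a i) • xCLM n i

lemma dotD_apply (n : ℕ) (a b x : Fin n → ℝ) (X : Mfd n) :
    dotD n a b x X = (x ⬝ᵥ b) * X.1 + a ⬝ᵥ X.2.2 := by
  simp [dotD, dotProduct]

lemma hasFDerivAt_dotq {n : ℕ} {g : ℝ → (Fin n → ℝ)} {g' : Fin n → ℝ} {m : Mfd n}
    (hg : HasDerivAt g g' m.1) :
    HasFDerivAt (fun m : Mfd n => m.2.2 ⬝ᵥ g m.1) (dotD n (g m.1) g' m.2.2) m := by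
  have heq : (fun m : Mfd n => m.2.2 ⬝ᵥ g m.1) = fun m : Mfd n => ∑ i, m.2.2 i * g m.1 i := by
    funext m'; simp [dotProduct]
  rw [heq]
  have h := HasFDerivAt.fun_sum (u := (Finset.univ : Finset (Fin n)))
    (fun i _ => ((xCLM n i).hasFDerivAt (x := m)).fun_mul
      (hasFDerivAt_uscalar (hasDerivAt_proj i hg)))
  refine h.congr_fderiv (ContinuousLinearMap.ext fun X => ?_)
  rw [dotD_apply]
  simp only [ContinuousLinearMap.coe_sum', Finset.sum_apply, ContinuousLinearMap.add_apply,
    ContinuousLinearMap.smul_apply, ContinuousLinearMap.coe_comp', Function.comp_apply,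
    ContinuousLinearMap.smulRight_apply, ContinuousLinearMap.one_apply, xCLM_apply, uCLM_apply,
    smul_eq_mul]
  simp only [dotProduct, Finset.sum_mul, Finset.sum_add_distrib]
  rw [← sub_eq_zero]
  simp only [← Finset.sum_sub_distrib, ← Finset.sum_add_distrib]
  exact Finset.sum_eq_zero fun i _ => by ring

/-- symmetric matrix dot product swap -/
lemma dot_symm {n : ℕ} {A : Matrix (Fin n) (Fin n) ℝ} (hA : Aᵀ = A) (x y : Fin n → ℝ) :
    y ⬝ᵥ (A *ᵥ x) = x ⬝ᵥ (A *ᵥ y) := by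
  rw [Matrix.dotProduct_mulVec, ← Matrix.mulVec_transpose, hA, dotProduct_comm]

theorem part3 (n : ℕ)
    (U : Set ℝ) (hUopen : IsOpen U)
    (p : ℝ → Matrix (Fin n) (Fin n) ℝ)
    (hpsmooth : ContDiffOn ℝ (⊤ : ℕ∞) p U)
    (hpsymm : ∀ u ∈ U, (p u)ᵀ = p u) :
    (∀ q : ℝ → (Fin n → ℝ), ContDiffOn ℝ (⊤ : ℕ∞) q U →
      (∀ u ∈ U, deriv (deriv q) u + p u *ᵥ q u = 0) →
      ∀ m ∈ {m : Mfd n | m.1 ∈ U}, ∀ X Y,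
        lieD n (fun m : Mfd n => ((0 : ℝ), m.2.2 ⬝ᵥ deriv q m.1, q m.1))
          (Gb n p) m X Y = 0) := by
  intro q hq hJac m hu X Y
  have hp := hasDerivAt_of_contDiffOn hUopen hpsmooth hu
  have hq1 : HasDerivAt q (deriv q m.1) m.1 := hasDerivAt_of_contDiffOn hUopen hq hu
  have hq2 : HasDerivAt (deriv q) (deriv (deriv q) m.1) m.1 :=
    hasDerivAt_of_contDiffOn hUopen (contDiffOn_deriv hUopen hq) hu
  have hc2 := hasFDerivAt_dotq (m := m) hq2
  have hc3 := hasFDerivAt_uvec (m := m) hq1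
  have hV : HasFDerivAt (fun m : Mfd n => ((0 : ℝ), m.2.2 ⬝ᵥ deriv q m.1, q m.1))
      ((0 : Mfd n →L[ℝ] ℝ).prod ((dotD n (deriv q m.1) (deriv (deriv q) m.1) m.2.2).prod
        (((1 : ℝ →L[ℝ] ℝ).smulRight (deriv q m.1)).comp (uCLM n)))) m :=
    (hasFDerivAt_const (0:ℝ) m).prodMk (hc2.prodMk hc3)
  simp only [lieD, hV.fderiv]
  rw [fderiv_Gb_apply hp]
  simp only [ContinuousLinearMap.prod_apply, ContinuousLinearMap.zero_apply, dotD_apply,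
    ContinuousLinearMap.coe_comp', Function.comp_apply, ContinuousLinearMap.smulRight_apply,
    ContinuousLinearMap.one_apply, uCLM_apply]
  simp only [Gb]
  have hqq : deriv (deriv q) m.1 = -(p m.1 *ᵥ q m.1) :=
    eq_neg_of_add_eq_zero_left (hJac m.1 hu)
  rw [hqq, dot_symm (hpsymm m.1 hu)]
  simp only [dotProduct_neg, smul_dotProduct, dotProduct_smul, smul_eq_mul]
  rw [dotProduct_comm (deriv q m.1) X.2.2, dotProduct_comm (deriv q m.1) Y.2.2]
  ring

lemma mv_dot_mv {n : ℕ} (A : Matrix (Fin n) (Fin n) ℝ) (x z : Fin n → ℝ) :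
    (A *ᵥ x) ⬝ᵥ z = x ⬝ᵥ (Aᵀ *ᵥ z) := by
  rw [dotProduct_comm, Matrix.dotProduct_mulVec, dotProduct_comm, ← Matrix.mulVec_transpose]

lemma dot_skew {n : ℕ} {W : Matrix (Fin n) (Fin n) ℝ} (hW : Wᵀ = -W) (x : Fin n → ℝ) :
    x ⬝ᵥ (W *ᵥ x) = 0 := by
  have h : x ⬝ᵥ (W *ᵥ x) = - (x ⬝ᵥ (W *ᵥ x)) := by
    conv_lhs => rw [Matrix.dotProduct_mulVec, ← Matrix.mulVec_transpose, hW, Matrix.neg_mulVec,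
      neg_dotProduct, dotProduct_comm (W *ᵥ x) x]
  linarith

lemma dot_transpose {n : ℕ} (M : Matrix (Fin n) (Fin n) ℝ) (x : Fin n → ℝ) :
    x ⬝ᵥ (Mᵀ *ᵥ x) = x ⬝ᵥ (M *ᵥ x) := by
  rw [Matrix.mulVec_transpose, Matrix.dotProduct_mulVec, dotProduct_comm]

def mulVecCLM (n : ℕ) (W : Matrix (Fin n) (Fin n) ℝ) : (Fin n → ℝ) →L[ℝ] (Fin n → ℝ) :=
  LinearMap.toContinuousLinearMap W.mulVecLin
@[simp] lemma mulVecCLM_apply (n : ℕ) (W : Matrix (Fin n) (Fin n) ℝ) (x : Fin n → ℝ) :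
    mulVecCLM n W x = W *ᵥ x := rfl

theorem part4 (n : ℕ)
    (U : Set ℝ) (hUopen : IsOpen U)
    (p : ℝ → Matrix (Fin n) (Fin n) ℝ)
    (hpsmooth : ContDiffOn ℝ (⊤ : ℕ∞) p U)
    (hpsymm : ∀ u ∈ U, (p u)ᵀ = p u) :
    (∀ (w : ℝ → ℝ) (W : Matrix (Fin n) (Fin n) ℝ),
      ContDiffOn ℝ (⊤ : ℕ∞) w U → Wᵀ = -W →
      (∀ u ∈ U, deriv (deriv (deriv w)) u
        + 4 * trPart n p u * deriv w u + 2 * deriv (trPart n p) u * w u = 0) →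
      (∀ u ∈ U, w u • deriv (tfPart n p) u + (2 * deriv w u) • tfPart n p u
        + tfPart n p u * W - W * tfPart n p u = 0) →
      ∀ m ∈ {m : Mfd n | m.1 ∈ U}, ∀ X Y,
        lieD n (fun m : Mfd n =>
            (w m.1,
             (1 / 4) * deriv (deriv w) m.1 * (m.2.2 ⬝ᵥ m.2.2),
             ((1 / 2) * deriv w m.1) • m.2.2 + W *ᵥ m.2.2))
          (Gb n p) m X Y = deriv w m.1 * Gb n p m X Y) := by
  intro w W hw hskew hODE hMat m hu X Y
  have hp := hasDerivAt_of_contDiffOn hUopen hpsmooth hu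
  have hw1 : HasDerivAt w (deriv w m.1) m.1 := hasDerivAt_of_contDiffOn hUopen hw hu
  have hw2 : HasDerivAt (deriv w) (deriv (deriv w) m.1) m.1 :=
    hasDerivAt_of_contDiffOn hUopen (contDiffOn_deriv hUopen hw) hu
  have hw3 : HasDerivAt (deriv (deriv w)) (deriv (deriv (deriv w)) m.1) m.1 :=
    hasDerivAt_of_contDiffOn hUopen (contDiffOn_deriv hUopen (contDiffOn_deriv hUopen hw)) hu
  -- trace part has a derivative
  have htr : HasDerivAt (trPart n p) ((deriv p m.1).trace / n) m.1 := by
    have h := (HasDerivAt.fun_sum (u := (Finset.univ : Finset (Fin n)))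
      (fun i _ => hasDerivAt_entry i i hp)).div_const (n : ℝ)
    unfold trPart; simp only [Matrix.trace, Matrix.diag]; exact h
  have htf : HasDerivAt (tfPart n p) (deriv p m.1 - ((deriv p m.1).trace / n) • 1) m.1 :=
    hp.sub (htr.smul_const 1)
  have hpdecomp : p m.1 = tfPart n p m.1 + trPart n p m.1 • 1 := by
    simp [tfPart]
  have hpd : deriv p m.1 = deriv (tfPart n p) m.1 + deriv (trPart n p) m.1 • 1 := by
    rw [show deriv (tfPart n p) m.1 = _ from htf.deriv, show deriv (trPart n p) m.1 = _ from htr.deriv]; simp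
  -- vector field derivative
  have hc1 := hasFDerivAt_uscalar (m := m) hw1
  have hg := hasFDerivAt_uscalar (m := m) (hw3.const_mul (1/4 : ℝ))
  have hr : HasFDerivAt (fun m : Mfd n => m.2.2 ⬝ᵥ m.2.2) (quadD n 1 0 m.2.2) m := by
    have h := hasFDerivAt_quad (p := fun _ => (1 : Matrix (Fin n) (Fin n) ℝ))
      (m := m) (hasDerivAt_const m.1 _)
    simpa [Matrix.one_mulVec] using h
  have hc2 := hg.mul hr
  have hs := hasFDerivAt_uscalar (m := m) (hw2.const_mul (1/2 : ℝ))
  have hsm := hs.smul ((xvecCLM n).hasFDerivAt (x := m))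
  have hWm : HasFDerivAt (fun m : Mfd n => W *ᵥ m.2.2)
      ((mulVecCLM n W).comp (xvecCLM n)) m := ((mulVecCLM n W).comp (xvecCLM n)).hasFDerivAt
  have hc3 := hsm.add hWm
  have hV : HasFDerivAt (fun m : Mfd n =>
      (w m.1,
       (1 / 4) * deriv (deriv w) m.1 * (m.2.2 ⬝ᵥ m.2.2),
       ((1 / 2) * deriv w m.1) • m.2.2 + W *ᵥ m.2.2)) _ m := hc1.prodMk (hc2.prodMk hc3)
  simp only [lieD, hV.fderiv]
  rw [fderiv_Gb_apply hp]
  simp only [ContinuousLinearMap.prod_apply, ContinuousLinearMap.add_apply,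
    ContinuousLinearMap.smul_apply, ContinuousLinearMap.coe_comp', Function.comp_apply,
    ContinuousLinearMap.smulRight_apply, ContinuousLinearMap.one_apply, xvecCLM_apply,
    uCLM_apply, mulVecCLM_apply, quadD_apply, smul_eq_mul]
  simp only [Gb]
  simp only [Matrix.mulVec_add, Matrix.mulVec_smul, dotProduct_add, add_dotProduct,
    dotProduct_smul, smul_dotProduct, smul_eq_mul, Matrix.mulVec_mulVec,
    Matrix.zero_mulVec, dotProduct_zero, Matrix.one_mulVec]
  have htfsymm : (tfPart n p m.1)ᵀ = tfPart n p m.1 := by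
    simp [tfPart, Matrix.transpose_smul, hpsymm m.1 hu]
  have hflip : m.2.2 ⬝ᵥ ((W * tfPart n p m.1) *ᵥ m.2.2)
      = -(m.2.2 ⬝ᵥ ((tfPart n p m.1 * W) *ᵥ m.2.2)) := by
    rw [← dot_transpose (W * tfPart n p m.1), Matrix.transpose_mul, htfsymm, hskew,
      Matrix.mul_neg, Matrix.neg_mulVec, dotProduct_neg]
  rw [mv_dot_mv W m.2.2 (p m.1 *ᵥ m.2.2), mv_dot_mv W X.2.2 Y.2.2, hskew]
  simp only [Matrix.neg_mulVec, dotProduct_neg, Matrix.mulVec_mulVec]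
  rw [dotProduct_comm X.2.2 m.2.2, dotProduct_comm Y.2.2 m.2.2]
  rw [hp.deriv.symm.trans hpd]
  rw [hpdecomp]
  simp only [Matrix.add_mulVec, Matrix.smul_mulVec, Matrix.one_mulVec, dotProduct_add,
    dotProduct_smul, smul_eq_mul, Matrix.mul_add, Matrix.add_mul, add_mul, mul_add,
    smul_mul_assoc, mul_smul_comm, one_mul, mul_one, Matrix.neg_mul, Matrix.neg_mulVec,
    dotProduct_neg, dot_skew hskew, neg_zero, mul_zero, add_zero, zero_add, neg_neg, hflip]
  have h2x := congrArg (fun M => m.2.2 ⬝ᵥ (M *ᵥ m.2.2)) (hMat m.1 hu)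
  simp only [Matrix.sub_mulVec, Matrix.add_mulVec, Matrix.smul_mulVec, dotProduct_add,
    dotProduct_sub, dotProduct_smul, smul_eq_mul, Matrix.zero_mulVec, dotProduct_zero,
    hflip] at h2x
  have h1x := hODE m.1 hu
  linear_combination (X.1 * Y.1) * h2x
    + ((m.2.2 ⬝ᵥ m.2.2) / 2 * X.1 * Y.1) * h1x

/-- the dilation `D`, the null translation `H`, the Heisenberg fields `X_q`
(for Jacobi fields `q`), and the fields `V_{(w,W)}` are conformal Killing fields of the
Brinkmann metric, with respective conformal factors `2`, `0`, `0` and `w'(u)`. -/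
theorem stmt16 (n : ℕ) (hn : 1 ≤ n)
    (U : Set ℝ) (hUopen : IsOpen U) (hUconv : Convex ℝ U) (hUne : U.Nonempty)
    (p : ℝ → Matrix (Fin n) (Fin n) ℝ)
    (hpsmooth : ContDiffOn ℝ (⊤ : ℕ∞) p U)
    (hpsymm : ∀ u ∈ U, (p u)ᵀ = p u) :
    (∀ m ∈ {m : Mfd n | m.1 ∈ U}, ∀ X Y,
      lieD n (fun m : Mfd n => (0, 2 * m.2.1, m.2.2)) (Gb n p) m X Y
        = 2 * Gb n p m X Y) ∧
    (∀ m ∈ {m : Mfd n | m.1 ∈ U}, ∀ X Y,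
      lieD n (fun _ : Mfd n => ((0 : ℝ), (1 : ℝ), (0 : Fin n → ℝ))) (Gb n p) m X Y
        = 0) ∧
    (∀ q : ℝ → (Fin n → ℝ), ContDiffOn ℝ (⊤ : ℕ∞) q U →
      (∀ u ∈ U, deriv (deriv q) u + p u *ᵥ q u = 0) →
      ∀ m ∈ {m : Mfd n | m.1 ∈ U}, ∀ X Y,
        lieD n (fun m : Mfd n => ((0 : ℝ), m.2.2 ⬝ᵥ deriv q m.1, q m.1))
          (Gb n p) m X Y = 0) ∧
    (∀ (w : ℝ → ℝ) (W : Matrix (Fin n) (Fin n) ℝ),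
      ContDiffOn ℝ (⊤ : ℕ∞) w U → Wᵀ = -W →
      (∀ u ∈ U, deriv (deriv (deriv w)) u
        + 4 * trPart n p u * deriv w u + 2 * deriv (trPart n p) u * w u = 0) →
      (∀ u ∈ U, w u • deriv (tfPart n p) u + (2 * deriv w u) • tfPart n p u
        + tfPart n p u * W - W * tfPart n p u = 0) →
      ∀ m ∈ {m : Mfd n | m.1 ∈ U}, ∀ X Y,
        lieD n (fun m : Mfd n =>
            (w m.1,
             (1 / 4) * deriv (deriv w) m.1 * (m.2.2 ⬝ᵥ m.2.2),
             ((1 / 2) * deriv w m.1) • m.2.2 + W *ᵥ m.2.2))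
          (Gb n p) m X Y = deriv w m.1 * Gb n p m X Y) := by
  refine ⟨part1 n U hUopen p hpsmooth, part2 n U hUopen p hpsmooth,
    part3 n U hUopen p hpsmooth hpsymm, part4 n U hUopen p hpsmooth hpsymm⟩
end
end

section
/- Let p : 𝕌 → Sym(n,ℝ) be smooth, and let q, r : 𝕌 → ℝⁿ be smooth solutions of q''(u) + p(u)q(u) = 0 and r''(u) + p(u)r(u) = 0. Then: (i) the Wronskian-type function u ↦ q(u)ᵀr'(u) − r(u)ᵀq'(u) is constant on 𝕌; denote its value ω(q,r). (ii) The vector fields X_q(u,v,x) = (0, xᵀq'(u), q(u)) and X_r(u,v,x) = (0, xᵀr'(u), r(u)) on 𝕄 = 𝕌×ℝ×ℝⁿ satisfy [X_q, X_r] = ω(q,r)·H, where H is the constant vector field H(u,v,x) = (0,1,0) (so the fields H and X_q span a Heisenberg Lie algebra). -/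
open Matrix

attribute [local instance] Matrix.normedAddCommGroup Matrix.normedSpace

noncomputable section

/-- Lie bracket of vector fields. -/
def bracket (n : ℕ) (V W : Mfd n → Mfd n) : Mfd n → Mfd n := fun m =>
  fderiv ℝ W m (V m) - fderiv ℝ V m (W m)

lemma hasDerivAt_apply' {n : ℕ} {f : ℝ → Fin n → ℝ} {f' : Fin n → ℝ} {u : ℝ}
    (hf : HasDerivAt f f' u) (i : Fin n) :
    HasDerivAt (fun u => f u i) (f' i) u := by
  have h := ((ContinuousLinearMap.proj (R := ℝ) (φ := fun _ : Fin n => ℝ) i).hasFDerivAt.comp u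
    hf.hasFDerivAt).hasDerivAt
  exact hasDerivAt_pi.1 hf i

lemma hasDerivAt_dot {n : ℕ} {f g : ℝ → Fin n → ℝ} {f' g' : Fin n → ℝ} {u : ℝ}
    (hf : HasDerivAt f f' u) (hg : HasDerivAt g g' u) :
    HasDerivAt (fun u => f u ⬝ᵥ g u) (f' ⬝ᵥ g u + f u ⬝ᵥ g') u := by
  have h : ∀ i ∈ Finset.univ, HasDerivAt (fun u => f u i * g u i)
      (f' i * g u i + f u i * g' i) u :=
    fun i _ => (hasDerivAt_apply' hf i).mul (hasDerivAt_apply' hg i)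
  simpa [dotProduct, Finset.sum_add_distrib] using HasDerivAt.fun_sum h

lemma key_fderiv {n : ℕ} (f : ℝ → Fin n → ℝ) (f' f'' : Fin n → ℝ) (m : Mfd n)
    (h1 : HasDerivAt f f' m.1) (h2 : HasDerivAt (deriv f) f'' m.1)
    (a : ℝ) (b : Fin n → ℝ) :
    fderiv ℝ (fun m : Mfd n => ((0 : ℝ), m.2.2 ⬝ᵥ deriv f m.1, f m.1)) m ((0 : ℝ), a, b)
      = ((0 : ℝ), b ⬝ᵥ deriv f m.1, (0 : Fin n → ℝ)) := by
  have hfst : HasFDerivAt (fun m : Mfd n => m.1)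
      (ContinuousLinearMap.fst ℝ ℝ (ℝ × (Fin n → ℝ))) m := hasFDerivAt_fst
  have h3 := h1.hasFDerivAt.comp m hfst
  have Li : Fin n → (Mfd n →L[ℝ] ℝ) := fun i =>
    (ContinuousLinearMap.proj (R := ℝ) (φ := fun _ : Fin n => ℝ) i).comp
      ((ContinuousLinearMap.snd ℝ ℝ (Fin n → ℝ)).comp
        (ContinuousLinearMap.snd ℝ ℝ (ℝ × (Fin n → ℝ))))
  have hxi : ∀ i : Fin n, HasFDerivAt (fun m : Mfd n => m.2.2 i)
      (((ContinuousLinearMap.proj (R := ℝ) (φ := fun _ : Fin n => ℝ) i).comp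
      ((ContinuousLinearMap.snd ℝ ℝ (Fin n → ℝ)).comp
        (ContinuousLinearMap.snd ℝ ℝ (ℝ × (Fin n → ℝ))))) : Mfd n →L[ℝ] ℝ) m := fun i => by
    exact ContinuousLinearMap.hasFDerivAt
      (((ContinuousLinearMap.proj (R := ℝ) (φ := fun _ : Fin n => ℝ) i).comp
      ((ContinuousLinearMap.snd ℝ ℝ (Fin n → ℝ)).comp
        (ContinuousLinearMap.snd ℝ ℝ (ℝ × (Fin n → ℝ))))) : Mfd n →L[ℝ] ℝ)
  have hfi : ∀ i : Fin n, HasFDerivAt (fun m : Mfd n => deriv f m.1 i)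
      (((1 : ℝ →L[ℝ] ℝ).smulRight (f'' i)).comp
        (ContinuousLinearMap.fst ℝ ℝ (ℝ × (Fin n → ℝ)))) m :=
    fun i => (hasDerivAt_apply' h2 i).hasFDerivAt.comp m hfst
  have hsum := HasFDerivAt.fun_sum (u := Finset.univ) (fun i _ => (hxi i).mul (hfi i))
  have htot := HasFDerivAt.prodMk (hasFDerivAt_const (0 : ℝ) m) (HasFDerivAt.prodMk hsum h3)
  have htot' : HasFDerivAt (fun m : Mfd n => ((0 : ℝ), m.2.2 ⬝ᵥ deriv f m.1, f m.1))
      (ContinuousLinearMap.prod 0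
        ((∑ i : Fin n,
          (m.2.2 i • ((1 : ℝ →L[ℝ] ℝ).smulRight (f'' i)).comp
              (ContinuousLinearMap.fst ℝ ℝ (ℝ × (Fin n → ℝ))) +
            deriv f m.1 i • ((ContinuousLinearMap.proj (R := ℝ) (φ := fun _ : Fin n => ℝ) i).comp
              ((ContinuousLinearMap.snd ℝ ℝ (Fin n → ℝ)).comp
                (ContinuousLinearMap.snd ℝ ℝ (ℝ × (Fin n → ℝ))))))).prod
          (((1 : ℝ →L[ℝ] ℝ).smulRight f').comp
            (ContinuousLinearMap.fst ℝ ℝ (ℝ × (Fin n → ℝ)))))) m := htot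
  rw [htot'.fderiv]
  simp [dotProduct, mul_comm]

/-- for Jacobi fields `q`, `r` of `p`, the Wronskian
`qᵀr' − rᵀq'` is constant, with value `ω(q,r)`, and the Heisenberg fields satisfy
`[X_q, X_r] = ω(q,r)·H` where `H = (0,1,0)`. -/
theorem stmt17 (n : ℕ) (hn : 1 ≤ n)
    (U : Set ℝ) (hUopen : IsOpen U) (hUconv : Convex ℝ U) (hUne : U.Nonempty)
    (p : ℝ → Matrix (Fin n) (Fin n) ℝ)
    (hpsmooth : ContDiffOn ℝ (⊤ : ℕ∞) p U)
    (hpsymm : ∀ u ∈ U, (p u)ᵀ = p u)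
    (q r : ℝ → (Fin n → ℝ))
    (hqsmooth : ContDiffOn ℝ (⊤ : ℕ∞) q U)
    (hrsmooth : ContDiffOn ℝ (⊤ : ℕ∞) r U)
    (hqode : ∀ u ∈ U, deriv (deriv q) u + p u *ᵥ q u = 0)
    (hrode : ∀ u ∈ U, deriv (deriv r) u + p u *ᵥ r u = 0) :
    ∃ c : ℝ,
      (∀ u ∈ U, q u ⬝ᵥ deriv r u - r u ⬝ᵥ deriv q u = c) ∧
      (∀ m ∈ {m : Mfd n | m.1 ∈ U},
        bracket n
          (fun m : Mfd n => ((0 : ℝ), m.2.2 ⬝ᵥ deriv q m.1, q m.1))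
          (fun m : Mfd n => ((0 : ℝ), m.2.2 ⬝ᵥ deriv r m.1, r m.1)) m
        = ((0 : ℝ), c, (0 : Fin n → ℝ))) := by
  obtain ⟨u₀, hu₀⟩ := hUne
  have h1top : (1 : WithTop ℕ∞) ≤ ((⊤ : ℕ∞) : WithTop ℕ∞) := by
    exact_mod_cast le_top
  have hq' : ContDiffOn ℝ (⊤ : ℕ∞) (deriv q) U :=
    hqsmooth.deriv_of_isOpen hUopen (by exact_mod_cast le_top)
  have hr' : ContDiffOn ℝ (⊤ : ℕ∞) (deriv r) U :=
    hrsmooth.deriv_of_isOpen hUopen (by exact_mod_cast le_top)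
  have hq1 : ∀ u ∈ U, HasDerivAt q (deriv q u) u := fun u hu =>
    ((hqsmooth.differentiableOn (by simp)).differentiableAt (hUopen.mem_nhds hu)).hasDerivAt
  have hr1 : ∀ u ∈ U, HasDerivAt r (deriv r u) u := fun u hu =>
    ((hrsmooth.differentiableOn (by simp)).differentiableAt (hUopen.mem_nhds hu)).hasDerivAt
  have hq2 : ∀ u ∈ U, HasDerivAt (deriv q) (deriv (deriv q) u) u := fun u hu =>
    ((hq'.differentiableOn (by simp)).differentiableAt (hUopen.mem_nhds hu)).hasDerivAt
  have hr2 : ∀ u ∈ U, HasDerivAt (deriv r) (deriv (deriv r) u) u := fun u hu =>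
    ((hr'.differentiableOn (by simp)).differentiableAt (hUopen.mem_nhds hu)).hasDerivAt
  set W : ℝ → ℝ := fun u => q u ⬝ᵥ deriv r u - r u ⬝ᵥ deriv q u with hWdef
  have hWd : ∀ u ∈ U, HasDerivAt W 0 u := by
    intro u hu
    have h := (hasDerivAt_dot (hq1 u hu) (hr2 u hu)).sub
      (hasDerivAt_dot (hr1 u hu) (hq2 u hu))
    have hq'' : deriv (deriv q) u = -(p u *ᵥ q u) :=
      eq_neg_of_add_eq_zero_left (hqode u hu)
    have hr'' : deriv (deriv r) u = -(p u *ᵥ r u) :=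
      eq_neg_of_add_eq_zero_left (hrode u hu)
    have hsym : q u ⬝ᵥ (p u *ᵥ r u) = r u ⬝ᵥ (p u *ᵥ q u) := by
      calc q u ⬝ᵥ (p u *ᵥ r u) = (q u ᵥ* p u) ⬝ᵥ r u := dotProduct_mulVec _ _ _
        _ = (p u *ᵥ q u) ⬝ᵥ r u := by rw [← mulVec_transpose, hpsymm u hu]
        _ = r u ⬝ᵥ (p u *ᵥ q u) := dotProduct_comm _ _
    have hzero : deriv q u ⬝ᵥ deriv r u + q u ⬝ᵥ deriv (deriv r) u -
        (deriv r u ⬝ᵥ deriv q u + r u ⬝ᵥ deriv (deriv q) u) = 0 := by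
      rw [hq'', hr'', dotProduct_neg, dotProduct_neg, hsym,
        dotProduct_comm (deriv q u) (deriv r u)]
      ring
    rw [hzero] at h
    exact h
  have hconst : ∀ u ∈ U, W u = W u₀ := by
    intro u hu
    refine hUconv.is_const_of_fderivWithin_eq_zero
      (fun z hz => ((hWd z hz).differentiableAt.differentiableWithinAt)) ?_ hu hu₀
    intro z hz
    rw [fderivWithin_of_isOpen hUopen hz, ((hWd z hz).hasFDerivAt).fderiv]
    ext t
    simp
  refine ⟨W u₀, hconst, ?_⟩
  intro m hm
  simp only [Set.mem_setOf_eq] at hm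
  show fderiv ℝ _ m _ - fderiv ℝ _ m _ = _
  rw [key_fderiv r (deriv r m.1) (deriv (deriv r) m.1) m (hr1 _ hm) (hr2 _ hm),
    key_fderiv q (deriv q m.1) (deriv (deriv q) m.1) m (hq1 _ hm) (hq2 _ hm)]
  rw [Prod.mk_sub_mk, Prod.mk_sub_mk]
  rw [← hconst m.1 hm]
  simp [hWdef]
end
end

section
/- Let 𝕌 ⊆ ℝ be a nonempty open interval, let p̃ : 𝕌 → Sym(n,ℝ) be smooth with tr(p̃(u)) = 0 for all u, let W be a constant skew-symmetric n×n matrix, and let w : 𝕌 → ℝ be smooth, satisfying w(u)p̃'(u) + 2w'(u)p̃(u) + p̃(u)W − Wp̃(u) = 0 for all u ∈ 𝕌. Then: (i) the function u ↦ w(u)⁴·tr(p̃(u)²) is constant on 𝕌. (ii) If moreover P : 𝕌 → ℝ is smooth with w''' + 4Pw' + 2P'w = 0 on 𝕌, and p̃(u) ≠ 0 for every u in some nonempty open subinterval 𝕌₀ ⊆ 𝕌, and the constant value of w⁴·tr(p̃²) is zero, then w(u) = 0 for every u ∈ 𝕌. -/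
open Matrix

attribute [local instance] Matrix.normedAddCommGroup Matrix.normedSpace

noncomputable section

/-- if `wp̃' + 2w'p̃ + p̃W − Wp̃ = 0` with `p̃` trace-free symmetric and `W`
constant skew, then `w⁴·tr(p̃²)` is constant; and if moreover `w''' + 4Pw' + 2P'w = 0`,
`p̃` is nonvanishing on some nonempty open subinterval, and the constant value is zero,
then `w ≡ 0` on `𝕌`. -/
theorem stmt18 (n : ℕ) (hn : 1 ≤ n)
    (U : Set ℝ) (hUopen : IsOpen U) (hUconv : Convex ℝ U) (hUne : U.Nonempty)
    (ptil : ℝ → Matrix (Fin n) (Fin n) ℝ)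
    (hptsmooth : ContDiffOn ℝ (⊤ : ℕ∞) ptil U)
    (hptsymm : ∀ u ∈ U, (ptil u)ᵀ = ptil u)
    (hpttr : ∀ u ∈ U, (ptil u).trace = 0)
    (W : Matrix (Fin n) (Fin n) ℝ) (hW : Wᵀ = -W)
    (w : ℝ → ℝ) (hwsmooth : ContDiffOn ℝ (⊤ : ℕ∞) w U)
    (heq : ∀ u ∈ U, w u • deriv ptil u + (2 * deriv w u) • ptil u
      + ptil u * W - W * ptil u = 0) :
    (∃ c : ℝ, ∀ u ∈ U, w u ^ 4 * (ptil u * ptil u).trace = c) ∧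
    (∀ P : ℝ → ℝ, ContDiffOn ℝ (⊤ : ℕ∞) P U →
      (∀ u ∈ U, deriv (deriv (deriv w)) u
        + 4 * P u * deriv w u + 2 * deriv P u * w u = 0) →
      ∀ U₀ : Set ℝ, U₀ ⊆ U → IsOpen U₀ → U₀.Nonempty →
      (∀ u ∈ U₀, ptil u ≠ 0) →
      (∀ u ∈ U, w u ^ 4 * (ptil u * ptil u).trace = 0) →
      ∀ u ∈ U, w u = 0) := by
  constructor
  · -- Part (i)
    have hderiv0 : ∀ x ∈ U, HasDerivAt (fun u => w u ^ 4 * (ptil u * ptil u).trace) 0 x := by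
      intro x hx
      have h1 : HasDerivAt ptil (deriv ptil x) x :=
        ((hptsmooth.differentiableOn (by norm_num)).differentiableAt
          (hUopen.mem_nhds hx)).hasDerivAt
      have he : ∀ i j, HasDerivAt (fun u => ptil u i j) (deriv ptil x i j) x := fun i j =>
        hasDerivAt_pi.1 (hasDerivAt_pi.1 h1 i) j
      have hw1 : HasDerivAt w (deriv w x) x :=
        ((hwsmooth.differentiableOn (by norm_num)).differentiableAt
          (hUopen.mem_nhds hx)).hasDerivAt
      have hg : HasDerivAt (fun u => (ptil u * ptil u).trace)
          (2 * (ptil x * deriv ptil x).trace) x := by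
        have hsum : HasDerivAt (fun u => ∑ i, ∑ j, ptil u i j * ptil u j i)
            (∑ i, ∑ j, (deriv ptil x i j * ptil x j i + ptil x i j * deriv ptil x j i)) x :=
          HasDerivAt.fun_sum fun i _ => HasDerivAt.fun_sum fun j _ => (he i j).mul (he j i)
        have e1 : (fun u => (ptil u * ptil u).trace)
            = (fun u => ∑ i, ∑ j, ptil u i j * ptil u j i) := by
          funext u
          simp [Matrix.trace, Matrix.mul_apply, Matrix.diag]
        have e2 : (∑ i, ∑ j, (deriv ptil x i j * ptil x j i + ptil x i j * deriv ptil x j i))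
            = 2 * (ptil x * deriv ptil x).trace := by
          simp only [Finset.sum_add_distrib]
          have h3 : ∑ i, ∑ j, deriv ptil x i j * ptil x j i
              = ∑ i, ∑ j, ptil x i j * deriv ptil x j i := by
            rw [Finset.sum_comm]
            congr 1; ext i; congr 1; ext j; ring
          rw [h3]
          simp [Matrix.trace, Matrix.mul_apply, Matrix.diag, two_mul]
        rw [e1, ← e2]; exact hsum
      have hkey : w x * (ptil x * deriv ptil x).trace
          + 2 * deriv w x * (ptil x * ptil x).trace = 0 := by
        have h0 := heq x hx
        have h4 := congrArg (fun M => (M * ptil x).trace) h0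
        simp only [add_mul, sub_mul, Matrix.smul_mul, Matrix.trace_add, Matrix.trace_sub,
          Matrix.trace_smul, Matrix.zero_mul, Matrix.trace_zero, smul_eq_mul] at h4
        have hc : ((ptil x * W) * ptil x).trace = ((W * ptil x) * ptil x).trace := by
          rw [Matrix.trace_mul_comm, ← Matrix.mul_assoc, Matrix.trace_mul_comm,
            ← Matrix.mul_assoc]
        have hqp : (deriv ptil x * ptil x).trace = (ptil x * deriv ptil x).trace :=
          Matrix.trace_mul_comm _ _
        rw [hc, hqp] at h4
        linarith [h4]
      have hd := ((hw1.pow 4).mul hg)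
      have hval : ((4 : ℕ) * w x ^ (4 - 1) * deriv w x) * (ptil x * ptil x).trace
          + w x ^ 4 * (2 * (ptil x * deriv ptil x).trace) = 0 := by
        push_cast
        norm_num
        linear_combination (2 * w x ^ 3) * hkey
      rw [← hval]
      exact hd
    obtain ⟨u₀, hu₀⟩ : U.Nonempty := hUne
    refine ⟨w u₀ ^ 4 * (ptil u₀ * ptil u₀).trace, fun u hu => ?_⟩
    have hb := hUconv.norm_image_sub_le_of_norm_hasDerivWithin_le (C := 0)
      (fun x hx => (hderiv0 x hx).hasDerivWithinAt) (fun x _ => by simp) hu₀ hu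
    rw [zero_mul] at hb
    have := norm_le_zero_iff.mp hb
    rwa [sub_eq_zero] at this
  · -- Part (ii)
    intro P hPsmooth hODE U₀ hU₀U hU₀open hU₀ne hptne hzero
    classical
    -- smoothness of derivatives
    have hw1smooth : ContDiffOn ℝ (⊤ : ℕ∞) (deriv w) U :=
      hwsmooth.deriv_of_isOpen hUopen (by norm_num)
    have hw2smooth : ContDiffOn ℝ (⊤ : ℕ∞) (deriv (deriv w)) U :=
      hw1smooth.deriv_of_isOpen hUopen (by norm_num)
    have hP1smooth : ContDiffOn ℝ (⊤ : ℕ∞) (deriv P) U :=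
      hPsmooth.deriv_of_isOpen hUopen (by norm_num)
    have hda : ∀ (f : ℝ → ℝ), ContDiffOn ℝ (⊤ : ℕ∞) f U → ∀ t ∈ U,
        HasDerivAt f (deriv f t) t := fun f hf t ht =>
      ((hf.differentiableOn (by norm_num)).differentiableAt (hUopen.mem_nhds ht)).hasDerivAt
    -- w vanishes on U₀
    have hwU₀ : ∀ u ∈ U₀, w u = 0 := by
      intro u hu
      have htr : 0 < (ptil u * ptil u).trace := by
        have hsym := hptsymm u (hU₀U hu)
        have htreq : (ptil u * ptil u).trace = ∑ i, ∑ j, (ptil u i j)^2 := by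
          simp only [Matrix.trace, Matrix.mul_apply, Matrix.diag]
          refine Finset.sum_congr rfl fun i _ => Finset.sum_congr rfl fun j _ => ?_
          have : ptil u j i = ptil u i j := by
            conv_lhs => rw [← hsym]
            rfl
          rw [this]; ring
        rw [htreq]
        obtain ⟨i, j, hij⟩ : ∃ i j, ptil u i j ≠ 0 := by
          by_contra h
          push_neg at h
          exact hptne u hu (by ext i j; simp [h])
        have h1 : (0:ℝ) < ∑ j', (ptil u i j')^2 :=
          Finset.sum_pos' (fun _ _ => sq_nonneg _)
            ⟨j, Finset.mem_univ j, by positivity⟩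
        refine Finset.sum_pos' (fun i' _ => Finset.sum_nonneg fun j' _ => sq_nonneg _)
          ⟨i, Finset.mem_univ i, h1⟩
      have h0 := hzero u (hU₀U hu)
      have : w u ^ 4 = 0 := by
        rcases mul_eq_zero.1 h0 with h | h
        · exact h
        · exact absurd h (ne_of_gt htr)
      exact pow_eq_zero_iff (by norm_num) |>.mp this
    -- derivatives of w vanish on U₀
    have hw1U₀ : ∀ u ∈ U₀, deriv w u = 0 := by
      intro u hu
      have hev : w =ᶠ[nhds u] (fun _ => (0:ℝ)) :=
        Filter.eventually_of_mem (hU₀open.mem_nhds hu) hwU₀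
      rw [hev.deriv_eq]; simp
    have hw2U₀ : ∀ u ∈ U₀, deriv (deriv w) u = 0 := by
      intro u hu
      have hev : deriv w =ᶠ[nhds u] (fun _ => (0:ℝ)) :=
        Filter.eventually_of_mem (hU₀open.mem_nhds hu) hw1U₀
      rw [hev.deriv_eq]; simp
    -- the vanishing set
    set y : ℝ → (Fin 3 → ℝ) := fun t => ![w t, deriv w t, deriv (deriv w) t] with hy
    set V : Set ℝ := {t | t ∈ U ∧ y t = 0} with hV
    -- local vanishing via ODE uniqueness
    have hloc : ∀ t₀ ∈ V, ∃ a b : ℝ, t₀ ∈ Set.Ioo a b ∧ Set.Ioo a b ⊆ V := by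
      intro t₀ ht₀
      obtain ⟨ht₀U, ht₀y⟩ := ht₀
      obtain ⟨ε, hε, hball⟩ := Metric.isOpen_iff.1 hUopen t₀ ht₀U
      set a := t₀ - ε/2 with ha
      set b := t₀ + ε/2 with hb
      have hab : a < b := by simp [ha, hb]; linarith
      have hIccU : Set.Icc a b ⊆ U := by
        intro s hs
        apply hball
        rw [Metric.mem_ball, Real.dist_eq, abs_sub_lt_iff]
        constructor <;> [skip; skip] <;>
          (obtain ⟨h1, h2⟩ := hs; simp [ha, hb] at h1 h2 ⊢; linarith)
      -- bounds for P and P' on Set.Icc a b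
      obtain ⟨C₁, hC₁⟩ := isCompact_Icc.exists_bound_of_continuousOn
        (hPsmooth.continuousOn.mono hIccU)
      obtain ⟨C₂, hC₂⟩ := isCompact_Icc.exists_bound_of_continuousOn
        (hP1smooth.continuousOn.mono hIccU)
      set D₁ := max C₁ 0 with hD₁
      set D₂ := max C₂ 0 with hD₂
      have hD₁0 : 0 ≤ D₁ := le_max_right _ _
      have hD₂0 : 0 ≤ D₂ := le_max_right _ _
      set K₀ : ℝ := 1 + 4*D₁ + 2*D₂ with hK₀
      have hK₀1 : (1:ℝ) ≤ K₀ := by simp [hK₀]; linarith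
      have hK₀0 : 0 ≤ K₀ := by linarith
      -- clamp
      set π : ℝ → ℝ := fun t => max a (min t b) with hπ
      have hπmem : ∀ t, π t ∈ Set.Icc a b := fun t =>
        ⟨le_max_left _ _, max_le hab.le (min_le_right _ _)⟩
      have hπid : ∀ t ∈ Set.Icc a b, π t = t := by
        intro t ht
        simp [hπ, min_eq_left ht.2, max_eq_right ht.1]
      set v : ℝ → (Fin 3 → ℝ) → (Fin 3 → ℝ) := fun t x =>
        ![x 1, x 2, -(4 * P (π t) * x 1) - 2 * deriv P (π t) * x 0] with hv
      have hPb : ∀ t, |P (π t)| ≤ D₁ := fun t =>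
        le_trans (le_of_eq (Real.norm_eq_abs _).symm) ((hC₁ _ (hπmem t)).trans (le_max_left _ _))
      have hP'b : ∀ t, |deriv P (π t)| ≤ D₂ := fun t =>
        le_trans (le_of_eq (Real.norm_eq_abs _).symm) ((hC₂ _ (hπmem t)).trans (le_max_left _ _))
      have hlip : ∀ t, LipschitzOnWith K₀.toNNReal (v t) Set.univ := by
        intro t
        apply LipschitzWith.lipschitzOnWith
        apply LipschitzWith.of_dist_le_mul
        intro x z
        rw [Real.coe_toNNReal _ hK₀0]
        have hd0 : (0:ℝ) ≤ K₀ * dist x z := mul_nonneg hK₀0 dist_nonneg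
        rw [dist_pi_le_iff hd0]
        intro i
        have h0 : dist (x 0) (z 0) ≤ dist x z := dist_le_pi_dist x z 0
        have h1 : dist (x 1) (z 1) ≤ dist x z := dist_le_pi_dist x z 1
        have h2 : dist (x 2) (z 2) ≤ dist x z := dist_le_pi_dist x z 2
        have hdnn : (0:ℝ) ≤ dist x z := dist_nonneg
        fin_cases i
        · simpa [hv] using h1.trans (le_mul_of_one_le_left hdnn hK₀1)
        · simpa [hv] using h2.trans (le_mul_of_one_le_left hdnn hK₀1)
        · show dist (-(4 * P (π t) * x 1) - 2 * deriv P (π t) * x 0)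
              (-(4 * P (π t) * z 1) - 2 * deriv P (π t) * z 0) ≤ K₀ * dist x z
          rw [Real.dist_eq]
          have e : (-(4 * P (π t) * x 1) - 2 * deriv P (π t) * x 0)
              - (-(4 * P (π t) * z 1) - 2 * deriv P (π t) * z 0)
              = 4 * P (π t) * (z 1 - x 1) + 2 * deriv P (π t) * (z 0 - x 0) := by ring
          rw [e]
          have hb1 : |4 * P (π t) * (z 1 - x 1)| ≤ 4 * D₁ * dist x z := by
            rw [abs_mul, abs_mul, abs_of_nonneg (by norm_num : (0:ℝ) ≤ 4)]
            have : |z 1 - x 1| ≤ dist x z := by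
              rw [abs_sub_comm, ← Real.dist_eq]; exact h1
            have := mul_le_mul (mul_le_mul_of_nonneg_left (hPb t) (by norm_num : (0:ℝ) ≤ 4))
              this (abs_nonneg _) (by positivity)
            linarith
          have hb2 : |2 * deriv P (π t) * (z 0 - x 0)| ≤ 2 * D₂ * dist x z := by
            rw [abs_mul, abs_mul, abs_of_nonneg (by norm_num : (0:ℝ) ≤ 2)]
            have : |z 0 - x 0| ≤ dist x z := by
              rw [abs_sub_comm, ← Real.dist_eq]; exact h0
            have := mul_le_mul (mul_le_mul_of_nonneg_left (hP'b t) (by norm_num : (0:ℝ) ≤ 2))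
              this (abs_nonneg _) (by positivity)
            linarith
          calc |4 * P (π t) * (z 1 - x 1) + 2 * deriv P (π t) * (z 0 - x 0)|
              ≤ |4 * P (π t) * (z 1 - x 1)| + |2 * deriv P (π t) * (z 0 - x 0)| := abs_add_le _ _
            _ ≤ 4 * D₁ * dist x z + 2 * D₂ * dist x z := add_le_add hb1 hb2
            _ ≤ K₀ * dist x z := by rw [hK₀]; nlinarith
      have hIooU : Set.Ioo a b ⊆ U := fun s hs => hIccU (Set.Ioo_subset_Icc_self hs)
      have hy' : ∀ t ∈ Set.Ioo a b, HasDerivAt y (v t (y t)) t := by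
        intro t ht
        have htU : t ∈ U := hIooU ht
        have hπt : π t = t := hπid t (Set.Ioo_subset_Icc_self ht)
        rw [hasDerivAt_pi]
        intro i
        fin_cases i
        · have := hda w hwsmooth t htU
          simpa [hv, hy] using this
        · have := hda (deriv w) hw1smooth t htU
          simpa [hv, hy] using this
        · have h3 := hda (deriv (deriv w)) hw2smooth t htU
          have hval : deriv (deriv (deriv w)) t
              = -(4 * P (π t) * deriv w t) - 2 * deriv P (π t) * w t := by
            rw [hπt]
            have := hODE t htU
            linarith
          rw [hval] at h3
          simpa [hv, hy] using h3
      have h0' : ∀ t ∈ Set.Ioo a b, HasDerivAt (fun _ : ℝ => (0 : Fin 3 → ℝ)) (v t 0) t := by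
        intro t ht
        have : v t 0 = 0 := by
          funext i
          fin_cases i <;> simp [hv]
        rw [this]
        exact hasDerivAt_const t 0
      have ht₀mem : t₀ ∈ Set.Ioo a b := by constructor <;> simp [ha, hb] <;> linarith
      have huniq : Set.EqOn y (fun _ => (0 : Fin 3 → ℝ)) (Set.Ioo a b) :=
        ODE_solution_unique_of_mem_Ioo (s := fun _ => Set.univ) (fun t _ => hlip t) ht₀mem
          (fun t ht => ⟨hy' t ht, Set.mem_univ _⟩)
          (fun t ht => ⟨h0' t ht, Set.mem_univ _⟩) ht₀y
      exact ⟨a, b, ht₀mem, fun t ht => ⟨hIooU ht, huniq ht⟩⟩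
    -- V is open
    have hVopen : IsOpen V := by
      rw [isOpen_iff_mem_nhds]
      intro t₀ ht₀
      obtain ⟨a, b, htmem, hsub⟩ := hloc t₀ ht₀
      exact Filter.mem_of_superset (Ioo_mem_nhds htmem.1 htmem.2) hsub
    -- closure condition
    have hclosure : closure V ∩ U ⊆ V := by
      rintro t ⟨htc, htU⟩
      refine ⟨htU, ?_⟩
      have hycont : ContinuousAt y t := by
        have hw : ContinuousAt w t :=
          hwsmooth.continuousOn.continuousAt (hUopen.mem_nhds htU)
        have hw1 : ContinuousAt (deriv w) t :=
          hw1smooth.continuousOn.continuousAt (hUopen.mem_nhds htU)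
        have hw2 : ContinuousAt (deriv (deriv w)) t :=
          hw2smooth.continuousOn.continuousAt (hUopen.mem_nhds htU)
        rw [hy]
        apply continuousAt_pi.2
        intro i
        fin_cases i
        · simpa using hw
        · simpa using hw1
        · simpa using hw2
      have := mem_closure_image hycont htc
      have himg : y '' V ⊆ {0} := by
        rintro _ ⟨s, hs, rfl⟩
        exact hs.2
      have := closure_mono himg this
      simpa using this
    -- conclude
    obtain ⟨u₀, hu₀⟩ := hU₀ne
    have hu₀V : u₀ ∈ V := ⟨hU₀U hu₀, by
      funext i
      fin_cases i <;> simp [hy, hwU₀ u₀ hu₀, hw1U₀ u₀ hu₀, hw2U₀ u₀ hu₀]⟩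
    have hUV : U ⊆ V :=
      hUconv.isPreconnected.subset_of_closure_inter_subset hVopen
        ⟨u₀, hU₀U hu₀, hu₀V⟩ hclosure
    intro u hu
    have := (hUV hu).2
    have := congrFun this 0
    simpa [hy] using this
end
end
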